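/- Let P be a partial order on a finite set X that is the disjoint union of chains C₁, …, C_w of sizes c₁, …, c_w summing to n. Then the graph entropy of the incomparability graph of P is exactly Σ_{i=1}^{w} (c_i/n) log₂(n/c_i), i.e., H(Ḡ) = Σ_i (c_i/n) log₂(n/c_i) where Ḡ is the complete multipartite graph with parts C₁, …, C_w. -/

import Mathlib

open scoped Classical

/-- Körner's graph entropy: `H(G) = min_{λ ∈ STAB(G)} -(1/n) ∑_u log₂ λ(u)`, where
`STAB(G)` is the convex hull of characteristic vectors of independent sets (the minimum is
taken over `λ` with strictly positive coordinates, since zero coordinates give `+∞`). -/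
noncomputable def graphEntropy {V : Type*} [Fintype V] (G : SimpleGraph V) : ℝ :=
  sInf {e : ℝ | ∃ lam ∈ convexHull ℝ {x : V → ℝ | ∃ S : Finset V,
      (∀ a ∈ S, ∀ b ∈ S, ¬ G.Adj a b) ∧ x = fun v => if v ∈ S then (1 : ℝ) else 0},
    (∀ v, 0 < lam v) ∧
      e = -(1 / (Fintype.card V : ℝ)) * ∑ v, Real.logb 2 (lam v)}

/-- If `G` is the complete multipartite graph with parts `C₁, …, C_w` of sizes `c₁, …, c_w`
(the incomparability graph of a disjoint union of `w` chains), then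
`H(G) = ∑ᵢ (cᵢ/n) log₂ (n/cᵢ)`. -/
theorem stmt18 {V : Type*} [Fintype V] (G : SimpleGraph V)
    (w : ℕ) (C : Fin w → Finset V)
    (hpart : ∀ v : V, ∃! i, v ∈ C i)
    (hne : ∀ i, 0 < (C i).card)
    (hadj : ∀ a b : V, G.Adj a b ↔ ∃ i j, i ≠ j ∧ a ∈ C i ∧ b ∈ C j) :
    graphEntropy G = ∑ i, ((C i).card : ℝ) / (Fintype.card V : ℝ) *
      Real.logb 2 ((Fintype.card V : ℝ) / ((C i).card : ℝ)) := by
  rcases Nat.eq_zero_or_pos (Fintype.card V) with h0 | hnpos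
  · -- degenerate case: V empty
    have hV : IsEmpty V := Fintype.card_eq_zero_iff.mp h0
    have hw0 : w = 0 := by
      rcases Nat.eq_zero_or_pos w with h | h
      · exact h
      · obtain ⟨v, -⟩ := Finset.card_pos.mp (hne ⟨0, h⟩)
        exact hV.elim v
    subst hw0
    haveI := hV
    have hmem0 : ∀ s : Set ℝ, s = {e : ℝ | ∃ lam ∈ convexHull ℝ {x : V → ℝ | ∃ S : Finset V,
        (∀ a ∈ S, ∀ b ∈ S, ¬ G.Adj a b) ∧ x = fun v => if v ∈ S then (1 : ℝ) else 0},
        (∀ v, 0 < lam v) ∧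
          e = -(1 / (Fintype.card V : ℝ)) * ∑ v, Real.logb 2 (lam v)} → True := fun _ _ => trivial
    rw [show (∑ i : Fin 0, ((C i).card : ℝ) / (Fintype.card V : ℝ) *
      Real.logb 2 ((Fintype.card V : ℝ) / ((C i).card : ℝ))) = 0 from by simp]
    unfold graphEntropy
    have hmem : (0:ℝ) ∈ {e : ℝ | ∃ lam ∈ convexHull ℝ {x : V → ℝ | ∃ S : Finset V,
        (∀ a ∈ S, ∀ b ∈ S, ¬ G.Adj a b) ∧ x = fun v => if v ∈ S then (1 : ℝ) else 0},
        (∀ v, 0 < lam v) ∧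
          e = -(1 / (Fintype.card V : ℝ)) * ∑ v, Real.logb 2 (lam v)} :=
      ⟨fun _ => 1, subset_convexHull ℝ _ ⟨∅, by simp, funext fun v => hV.elim v⟩,
        fun v => hV.elim v, by simp⟩
    have hlb : ∀ e ∈ {e : ℝ | ∃ lam ∈ convexHull ℝ {x : V → ℝ | ∃ S : Finset V,
        (∀ a ∈ S, ∀ b ∈ S, ¬ G.Adj a b) ∧ x = fun v => if v ∈ S then (1 : ℝ) else 0},
        (∀ v, 0 < lam v) ∧
          e = -(1 / (Fintype.card V : ℝ)) * ∑ v, Real.logb 2 (lam v)}, (0:ℝ) ≤ e := by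
      rintro e ⟨lam, -, -, rfl⟩
      simp
    exact le_antisymm (csInf_le ⟨_, hlb⟩ hmem) (le_csInf ⟨_, hmem⟩ hlb)
  · -- main case
    have hnR : (0:ℝ) < (Fintype.card V : ℝ) := by exact_mod_cast hnpos
    have hidx : ∀ v : V, ∃ i, v ∈ C i := fun v => (hpart v).exists
    set idx : V → Fin w := fun v => (hidx v).choose with hidxdef
    have hmemC : ∀ v, v ∈ C (idx v) := fun v => (hidx v).choose_spec
    have huniq : ∀ v i, v ∈ C i → idx v = i := fun v i h => (hpart v).unique (hmemC v) h
    have hfib : ∀ i, Finset.univ.filter (fun v => idx v = i) = C i := by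
      intro i; ext v
      simp only [Finset.mem_filter, Finset.mem_univ, true_and]
      exact ⟨fun h => h ▸ hmemC v, huniq v i⟩
    have hsplit : ∀ (g : V → ℝ), ∑ v, g v = ∑ i, ∑ v ∈ C i, g v := by
      intro g
      rw [← Finset.sum_fiberwise Finset.univ idx g]
      exact Finset.sum_congr rfl fun i _ => by rw [hfib]
    have hcpos : ∀ i, (0:ℝ) < ((C i).card : ℝ) := fun i => by exact_mod_cast hne i
    have hcard : (Fintype.card V : ℝ) = ∑ i, ((C i).card : ℝ) := by
      have h1 := hsplit (fun _ => (1:ℝ))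
      simpa using h1
    set p : V → ℝ := fun v => ((C (idx v)).card : ℝ) / (Fintype.card V : ℝ) with hpdef
    have hppos : ∀ v, 0 < p v := fun v => div_pos (hcpos _) hnR
    set Sgen : Set (V → ℝ) := {x : V → ℝ | ∃ S : Finset V,
      (∀ a ∈ S, ∀ b ∈ S, ¬ G.Adj a b) ∧ x = fun v => if v ∈ S then (1 : ℝ) else 0} with hSgen
    -- C i indicators are in Sgen
    have hindep : ∀ i, ∀ a ∈ C i, ∀ b ∈ C i, ¬ G.Adj a b := by
      intro i a ha b hb hAdj
      obtain ⟨i', j', hij, hai, hbj⟩ := (hadj a b).mp hAdj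
      have h1 : idx a = i' := huniq a i' hai
      have h2 : idx a = i := huniq a i ha
      have h3 : idx b = j' := huniq b j' hbj
      have h4 : idx b = i := huniq b i hb
      exact hij (by rw [← h1, h2, ← h4, h3])
    -- p is in the convex hull
    have hphull : p ∈ convexHull ℝ Sgen := by
      have hw0 : ∀ i ∈ Finset.univ, (0:ℝ) ≤ ((C i).card : ℝ) / (Fintype.card V : ℝ) :=
        fun i _ => le_of_lt (div_pos (hcpos i) hnR)
      have hws : ∑ i, ((C i).card : ℝ) / (Fintype.card V : ℝ) = 1 := by
        rw [← Finset.sum_div, ← hcard, div_self (ne_of_gt hnR)]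
      have hz : ∀ i ∈ Finset.univ, (fun v => if v ∈ C i then (1:ℝ) else 0) ∈ Sgen :=
        fun i _ => ⟨C i, hindep i, rfl⟩
      have hmem := Finset.centerMass_mem_convexHull Finset.univ hw0 (by rw [hws]; norm_num) hz
      have heq : Finset.univ.centerMass (fun i => ((C i).card : ℝ) / (Fintype.card V : ℝ))
          (fun i => (fun v => if v ∈ C i then (1:ℝ) else 0)) = p := by
        rw [Finset.centerMass_eq_of_sum_1 _ _ hws]
        funext v
        rw [Finset.sum_apply]
        rw [Finset.sum_eq_single (idx v)]
        · simp [hmemC v, hpdef]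
        · intro i _ hiv
          have : v ∉ C i := fun h => hiv (huniq v i h).symm
          simp [this]
        · intro h; exact absurd (Finset.mem_univ _) h
      rwa [heq] at hmem
    -- value at p
    have hE : ∑ i, ((C i).card : ℝ) / (Fintype.card V : ℝ) *
        Real.logb 2 ((Fintype.card V : ℝ) / ((C i).card : ℝ))
        = -(1 / (Fintype.card V : ℝ)) * ∑ v, Real.logb 2 (p v) := by
      rw [hsplit (fun v => Real.logb 2 (p v))]
      have hinner : ∀ i, ∑ v ∈ C i, Real.logb 2 (p v)
          = ((C i).card : ℝ) * Real.logb 2 (((C i).card : ℝ) / (Fintype.card V : ℝ)) := by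
        intro i
        rw [Finset.sum_congr rfl (fun v hv => by
          rw [show p v = ((C i).card : ℝ) / (Fintype.card V : ℝ) from by
            simp only [hpdef]; rw [huniq v i hv]])]
        simp [Finset.sum_const, nsmul_eq_mul]
      rw [Finset.sum_congr rfl (fun i _ => hinner i), Finset.mul_sum]
      refine Finset.sum_congr rfl (fun i _ => ?_)
      have hlb : Real.logb 2 (((C i).card : ℝ) / (Fintype.card V : ℝ))
          = - Real.logb 2 ((Fintype.card V : ℝ) / ((C i).card : ℝ)) := by
        rw [show ((C i).card : ℝ) / (Fintype.card V : ℝ)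
          = ((Fintype.card V : ℝ) / ((C i).card : ℝ))⁻¹ from by rw [inv_div], Real.logb_inv]
      rw [hlb]; ring
    -- the half-space bound
    set Hset : Set (V → ℝ) :=
      {x : V → ℝ | ∑ v, x v * ((Fintype.card V : ℝ) / ((C (idx v)).card : ℝ))
        ≤ (Fintype.card V : ℝ)} with hHset
    have hgensub : Sgen ⊆ Hset := by
      rintro x ⟨S, hind, rfl⟩
      simp only [hHset, Set.mem_setOf_eq]
      have hrw : ∑ v, (if v ∈ S then (1:ℝ) else 0) * ((Fintype.card V : ℝ) / ((C (idx v)).card : ℝ))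
          = ∑ v ∈ S, ((Fintype.card V : ℝ) / ((C (idx v)).card : ℝ)) := by
        simp only [ite_mul, one_mul, zero_mul, Finset.sum_ite_mem, Finset.univ_inter]
      rw [hrw]
      rcases S.eq_empty_or_nonempty with rfl | ⟨a, haS⟩
      · simp only [Finset.sum_empty]; exact hnR.le
      · have hsame : ∀ v ∈ S, idx v = idx a := by
          intro v hv
          by_contra hne'
          exact hind a haS v hv ((hadj a v).mpr
            ⟨idx a, idx v, fun h => hne' h.symm, hmemC a, hmemC v⟩)
        have hsub : S ⊆ C (idx a) := fun v hv => by rw [← hsame v hv]; exact hmemC v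
        calc ∑ v ∈ S, ((Fintype.card V : ℝ) / ((C (idx v)).card : ℝ))
            = (S.card : ℝ) * ((Fintype.card V : ℝ) / ((C (idx a)).card : ℝ)) := by
              rw [Finset.sum_congr rfl (fun v hv => by rw [hsame v hv])]
              simp [Finset.sum_const, nsmul_eq_mul]
          _ ≤ ((C (idx a)).card : ℝ) * ((Fintype.card V : ℝ) / ((C (idx a)).card : ℝ)) := by
              apply mul_le_mul_of_nonneg_right
              · exact_mod_cast Finset.card_le_card hsub
              · positivity
          _ = (Fintype.card V : ℝ) := by
              rw [mul_comm, div_mul_cancel₀ _ (ne_of_gt (hcpos (idx a)))]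
    have hconv : Convex ℝ Hset := by
      intro x hx y hy a b ha hb hab
      simp only [hHset, Set.mem_setOf_eq] at hx hy ⊢
      have hexp : ∑ v, (a • x + b • y) v * ((Fintype.card V : ℝ) / ((C (idx v)).card : ℝ))
          = a * (∑ v, x v * ((Fintype.card V : ℝ) / ((C (idx v)).card : ℝ)))
          + b * (∑ v, y v * ((Fintype.card V : ℝ) / ((C (idx v)).card : ℝ))) := by
        rw [Finset.mul_sum, Finset.mul_sum, ← Finset.sum_add_distrib]
        exact Finset.sum_congr rfl fun v _ => by
          simp only [Pi.add_apply, Pi.smul_apply, smul_eq_mul]; ring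
      rw [hexp]
      calc a * _ + b * _ ≤ a * (Fintype.card V : ℝ) + b * (Fintype.card V : ℝ) :=
            add_le_add (mul_le_mul_of_nonneg_left hx ha) (mul_le_mul_of_nonneg_left hy hb)
        _ = (Fintype.card V : ℝ) := by rw [← add_mul, hab, one_mul]
    -- lower bound
    have hlog2 : (0:ℝ) < Real.log 2 := Real.log_pos one_lt_two
    have hlb : ∀ e ∈ {e : ℝ | ∃ lam ∈ convexHull ℝ Sgen,
        (∀ v, 0 < lam v) ∧
          e = -(1 / (Fintype.card V : ℝ)) * ∑ v, Real.logb 2 (lam v)},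
        (∑ i, ((C i).card : ℝ) / (Fintype.card V : ℝ) *
          Real.logb 2 ((Fintype.card V : ℝ) / ((C i).card : ℝ))) ≤ e := by
      rintro e ⟨lam, hhull, hpos, rfl⟩
      have hF : ∑ v, lam v * ((Fintype.card V : ℝ) / ((C (idx v)).card : ℝ))
          ≤ (Fintype.card V : ℝ) := convexHull_min hgensub hconv hhull
      have h2 : ∑ v, (lam v / p v) ≤ (Fintype.card V : ℝ) := by
        have heq : ∀ v, lam v / p v
            = lam v * ((Fintype.card V : ℝ) / ((C (idx v)).card : ℝ)) := by
          intro v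
          rw [hpdef, div_eq_mul_inv, inv_div]
        rw [Finset.sum_congr rfl fun v _ => heq v]
        exact hF
      have h1 : ∀ v, Real.log (lam v) - Real.log (p v) ≤ lam v / p v - 1 := fun v => by
        rw [← Real.log_div (ne_of_gt (hpos v)) (ne_of_gt (hppos v))]
        exact Real.log_le_sub_one_of_pos (div_pos (hpos v) (hppos v))
      have h3 : ∑ v, (Real.log (lam v) - Real.log (p v)) ≤ ∑ v, (lam v / p v - 1) :=
        Finset.sum_le_sum fun v _ => h1 v
      rw [Finset.sum_sub_distrib, Finset.sum_sub_distrib] at h3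
      have h4 : ∑ _v : V, (1:ℝ) = (Fintype.card V : ℝ) := by simp
      rw [h4] at h3
      have hlog : ∑ v, Real.log (lam v) ≤ ∑ v, Real.log (p v) := by linarith
      have hlogb : ∑ v, Real.logb 2 (lam v) ≤ ∑ v, Real.logb 2 (p v) := by
        simp only [Real.logb, div_eq_mul_inv, ← Finset.sum_mul]
        exact mul_le_mul_of_nonneg_right hlog (inv_nonneg.mpr hlog2.le)
      rw [hE]
      exact mul_le_mul_of_nonpos_left hlogb (neg_nonpos.mpr (by positivity))
    have hmem : (∑ i, ((C i).card : ℝ) / (Fintype.card V : ℝ) *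
        Real.logb 2 ((Fintype.card V : ℝ) / ((C i).card : ℝ)))
        ∈ {e : ℝ | ∃ lam ∈ convexHull ℝ Sgen,
          (∀ v, 0 < lam v) ∧
            e = -(1 / (Fintype.card V : ℝ)) * ∑ v, Real.logb 2 (lam v)} :=
      ⟨p, hphull, hppos, hE⟩
    show sInf _ = _
    exact le_antisymm (csInf_le ⟨_, hlb⟩ hmem) (le_csInf ⟨_, hmem⟩ hlb)
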